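/- On the extension E(P) of a poset with antitone involution (four-element-chain construction), a → b = 1 if and only if a ≤ b, for all a, b ∈ E(P). -/

import Mathlib

attribute [local instance] Classical.propDecidable

/-- The extension E(P) = P ∪ {c₁, c₂, c₃, c₄} of a poset P: `base x` is an
element of P, and `ext i` (i : Fin 4) is the element cᵢ₊₁, so `ext 0` = c₁ = 0
and `ext 3` = c₄ = 1. -/
inductive EP (P : Type*) where
  | base : P → EP P
  | ext : Fin 4 → EP P

namespace EP

variable {P : Type*} [PartialOrder P]

/-- The order on E(P): 0 = c₁ < c₂ < x < c₃ < c₄ = 1 for all x ∈ P. -/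
def le : EP P → EP P → Prop
  | base x, base y => x ≤ y
  | base _, ext i => 2 ≤ i.val
  | ext i, base _ => i.val ≤ 1
  | ext i, ext j => i ≤ j

instance : PartialOrder (EP P) where
  le := le
  le_refl x := by cases x <;> simp [le]
  le_trans x y z := by
    cases x <;> cases y <;> cases z <;>
      simp only [le, Fin.le_def] <;> intros <;>
      first
        | omega
        | (apply le_trans <;> assumption)
        | trivial
  le_antisymm x y := by
    cases x <;> cases y <;>
      simp only [le, Fin.le_def] <;> intros <;>
      first
        | (congr 1; apply le_antisymm <;> assumption)
        | (congr 1; omega)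
        | omega

/-- The extension of the antitone involution ' of P to E(P), with cᵢ' = c₅₋ᵢ. -/
def inv (f : P → P) : EP P → EP P
  | base x => base (f x)
  | ext i => ext ⟨3 - i.val, by omega⟩

/-- The monoid operation ⊙ on E(P). -/
noncomputable def mul (f : P → P) (x y : EP P) : EP P :=
  if x = ext 0 ∨ y = ext 0 then ext 0
  else if x = ext 3 then y
  else if y = ext 3 then x
  else if le x (inv f y) then ext 0 else ext 1

/-- The residuum → on E(P). -/
noncomputable def imp (f : P → P) (x y : EP P) : EP P :=
  if x = ext 0 ∨ y = ext 3 then ext 3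
  else if y = ext 0 then inv f x
  else if x = ext 3 then y
  else if le x y then ext 3 else ext 2

end EP

/-- On E(P), a → b = 1 if and only if a ≤ b. -/
theorem stmt9 {P : Type*} [PartialOrder P] (f : P → P)
    (hanti : ∀ x y : P, x ≤ y → f y ≤ f x) (hinv : ∀ x : P, f (f x) = x) :
    ∀ a b : EP P, EP.imp f a b = EP.ext 3 ↔ a ≤ b := by
  intro a b
  unfold EP.imp
  by_cases h1 : a = EP.ext 0 ∨ b = EP.ext 3
  · rw [if_pos h1]
    refine ⟨fun _ => ?_, fun _ => rfl⟩
    rcases h1 with h | h <;> subst h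
    · cases b with
      | base y => exact (by decide : (2:ℕ) ≤ 1 ∨ (0:Fin 4).val ≤ 1).resolve_left (by decide)
      | ext j => exact j.zero_le
    · cases a with
      | base x => show (2:ℕ) ≤ (3:Fin 4).val; decide
      | ext i => show i ≤ (3:Fin 4); omega
  · push_neg at h1
    obtain ⟨ha0, hb3⟩ := h1
    rw [if_neg (by tauto)]
    by_cases hb0 : b = EP.ext 0
    · subst hb0
      rw [if_pos rfl]
      constructor
      · intro h
        exfalso
        cases a with
        | base x => simp [EP.inv] at h
        | ext i =>
          simp only [EP.inv, EP.ext.injEq] at h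
          have hv := congrArg Fin.val h
          simp only at hv
          exact ha0 (by congr 1; omega)
      · intro h
        exfalso
        cases a with
        | base x =>
          have h' : (2:ℕ) ≤ (0:Fin 4).val := h
          omega
        | ext i =>
          have h' : i ≤ (0:Fin 4) := h
          exact ha0 (by congr 1; omega)
    · rw [if_neg hb0]
      by_cases ha3 : a = EP.ext 3
      · subst ha3
        rw [if_pos rfl]
        constructor
        · intro h; exact absurd h hb3
        · intro h
          exfalso
          cases b with
          | base x =>
            have h' : (3:Fin 4).val ≤ 1 := h
            omega
          | ext j =>
            have h' : (3:Fin 4) ≤ j := h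
            exact hb3 (by congr 1; omega)
      · rw [if_neg ha3]
        by_cases hle : EP.le a b
        · rw [if_pos hle]; exact ⟨fun _ => hle, fun _ => rfl⟩
        · rw [if_neg hle]
          exact ⟨fun h => absurd (EP.ext.inj h) (by decide), fun h => absurd h hle⟩
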